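/- Let n ≥ 1. If A is an n×n random real matrix whose entries A_ij are independent, each distributed according to a Borel probability measure μ_ij on ℝ that is atomless off 0, then the probability of the event {det A = 0 and there exists a permutation σ of {1,…,n} with ∏_{i=1}^n A_{σ(i),i} ≠ 0} is 0. -/

import Mathlib

open MeasureTheory Finset

lemma msetEq {α : Type*} [MeasurableSpace α] {f : α → ℝ} (hf : Measurable f) :
    MeasurableSet {x | f x = 0} := hf (measurableSet_singleton 0)

lemma msetNe {α : Type*} [MeasurableSpace α] {f : α → ℝ} (hf : Measurable f) :
    MeasurableSet {x | f x ≠ 0} := (msetEq hf).compl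

lemma prod_preimage_succ {n : ℕ} (T : Finset (Fin (n+1))) (hT : (0 : Fin (n+1)) ∉ T)
    (x : Fin (n+1) → ℝ) :
    ∏ i ∈ T.preimage Fin.succ (Fin.succ_injective n).injOn, x (Fin.succ i) = ∏ i ∈ T, x i := by
  refine Finset.prod_preimage _ _ _ _ ?_
  intro b hb hb'
  exfalso
  rcases Fin.eq_zero_or_eq_succ b with h | ⟨c, rfl⟩
  · exact hT (h ▸ hb)
  · exact hb' ⟨c, rfl⟩

lemma main_lemma :
    ∀ (n : ℕ) (μ : Fin n → Measure ℝ), (∀ i, IsProbabilityMeasure (μ i)) →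
    (∀ i (x : ℝ), x ≠ 0 → μ i {x} = 0) →
    ∀ (J : Type) (_ : Fintype J) (c : J → ℝ) (S : J → Finset (Fin n)),
    (∑ j ∈ univ.filter (fun j => S j = univ), c j) ≠ 0 →
    Measure.pi μ {x : Fin n → ℝ | (∑ j, c j * ∏ i ∈ S j, x i) = 0 ∧ ∀ i, x i ≠ 0} = 0 := by
  intro n
  induction n with
  | zero =>
    intro μ hprob hat J _ c S htop
    have huniv : ∀ j, S j = univ := fun j => Finset.eq_univ_iff_forall.2 fun i => i.elim0
    have hfilter : univ.filter (fun j => S j = univ) = univ :=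
      Finset.filter_true_of_mem fun j _ => huniv j
    have hempty : {x : Fin 0 → ℝ | (∑ j, c j * ∏ i ∈ S j, x i) = 0 ∧ ∀ i, x i ≠ 0} = ∅ := by
      ext x
      simp only [Set.mem_setOf_eq, Set.mem_empty_iff_false, iff_false, not_and]
      intro h
      exfalso
      apply htop
      rw [hfilter, ← h]
      refine Finset.sum_congr rfl fun j _ => ?_
      rw [huniv j]
      simp
    rw [hempty]
    simp
  | succ n IH =>
    intro μ hprob hat J _ c S htop
    haveI := hprob
    classical
    set S' : J → Finset (Fin n) :=
      fun j => (S j).preimage Fin.succ (Fin.succ_injective n).injOn with hS'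
    set cH : J → ℝ := fun j => if (0 : Fin (n+1)) ∈ S j then c j else 0 with hcH
    set cG : J → ℝ := fun j => if (0 : Fin (n+1)) ∈ S j then 0 else c j with hcG
    set H : (Fin n → ℝ) → ℝ := fun y => ∑ j, cH j * ∏ i ∈ S' j, y i with hH
    set G : (Fin n → ℝ) → ℝ := fun y => ∑ j, cG j * ∏ i ∈ S' j, y i with hG
    have key : ∀ x : Fin (n+1) → ℝ,
        (∑ j, c j * ∏ i ∈ S j, x i)
          = G (fun i => x i.succ) + x 0 * H (fun i => x i.succ) := by
      intro x
      rw [hG, hH]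
      simp only [Finset.mul_sum, ← Finset.sum_add_distrib]
      refine Finset.sum_congr rfl fun j _ => ?_
      by_cases h0 : (0 : Fin (n+1)) ∈ S j
      · have h1 : S' j = ((S j).erase 0).preimage Fin.succ (Fin.succ_injective n).injOn := by
          ext i
          simp [hS', Finset.mem_preimage, Fin.succ_ne_zero]
        simp only [hcG, hcH, if_pos h0]
        rw [h1, prod_preimage_succ _ (Finset.notMem_erase _ _),
          ← Finset.mul_prod_erase _ _ h0]
        ring
      · simp only [hcG, hcH, if_neg h0]
        rw [hS', prod_preimage_succ _ h0]
        ring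
    have hSiff : ∀ j, S j = Finset.univ ↔ ((0:Fin (n+1)) ∈ S j ∧ S' j = Finset.univ) := by
      intro j
      constructor
      · intro h
        refine ⟨by rw [h]; exact Finset.mem_univ _, ?_⟩
        ext i
        simp [hS', Finset.mem_preimage, h]
      · rintro ⟨h0, h1⟩
        ext i
        simp only [Finset.mem_univ, iff_true]
        induction i using Fin.cases with
        | zero => exact h0
        | succ i =>
          have : i ∈ S' j := by rw [h1]; exact Finset.mem_univ i
          simpa [hS', Finset.mem_preimage] using this
    have htop' : (∑ j ∈ univ.filter (fun j => S' j = univ), cH j) ≠ 0 := by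
      have heq : ∑ j ∈ univ.filter (fun j => S' j = univ), cH j
           = ∑ j ∈ univ.filter (fun j => S j = univ), c j := by
        rw [Finset.sum_filter, Finset.sum_filter]
        refine Finset.sum_congr rfl fun j _ => ?_
        by_cases h1 : S' j = univ
        · by_cases h0 : (0:Fin (n+1)) ∈ S j
          · rw [if_pos h1, if_pos ((hSiff j).2 ⟨h0, h1⟩)]
            simp [hcH, h0]
          · rw [if_pos h1, if_neg (fun h => h0 ((hSiff j).1 h).1)]
            simp [hcH, h0]
        · rw [if_neg h1, if_neg (fun h => h1 ((hSiff j).1 h).2)]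
      rw [heq]
      exact htop
    have hHm : Measurable H := Finset.measurable_sum _ fun j _ =>
      measurable_const.mul (Finset.measurable_prod _ fun i _ => measurable_pi_apply i)
    have hGm : Measurable G := Finset.measurable_sum _ fun j _ =>
      measurable_const.mul (Finset.measurable_prod _ fun i _ => measurable_pi_apply i)
    set ν := Measure.pi (fun j : Fin n => μ (Fin.succ j)) with hν
    have hIH : ν {y : Fin n → ℝ | H y = 0 ∧ ∀ i, y i ≠ 0} = 0 := by
      rw [hH]
      exact IH (fun j => μ (Fin.succ j)) (fun j => hprob _) (fun j x hx => hat _ x hx)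
        J ‹Fintype J› cH S' htop'
    set e := MeasurableEquiv.piFinSuccAbove (fun _ : Fin (n+1) => ℝ) 0 with he
    have mp := measurePreserving_piFinSuccAbove μ 0
    simp only [Fin.succAbove_zero] at mp
    set E2 : Set (ℝ × (Fin n → ℝ)) :=
      {p | G p.2 + p.1 * H p.2 = 0 ∧ p.1 ≠ 0 ∧ ∀ i, p.2 i ≠ 0} with hE2
    have hE2m : MeasurableSet E2 := by
      refine MeasurableSet.inter ?_ (MeasurableSet.inter ?_ ?_)
      · exact msetEq ((hGm.comp measurable_snd).add (measurable_fst.mul (hHm.comp measurable_snd)))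
      · exact msetNe measurable_fst
      · have h1 : ∀ i : Fin n, MeasurableSet {p : ℝ × (Fin n → ℝ) | p.2 i ≠ 0} :=
          fun i => msetNe ((measurable_pi_apply i).comp measurable_snd)
        have h2 := MeasurableSet.iInter h1
        have h3 : (⋂ i, {p : ℝ × (Fin n → ℝ) | p.2 i ≠ 0})
            = {p : ℝ × (Fin n → ℝ) | ∀ i, p.2 i ≠ 0} := by
          ext p; simp
        rwa [h3] at h2
    have hEeq : {x : Fin (n+1) → ℝ | (∑ j, c j * ∏ i ∈ S j, x i) = 0 ∧ ∀ i, x i ≠ 0}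
        = e ⁻¹' E2 := by
      ext x
      have hex : e x = (x 0, fun j => x (Fin.succ j)) := by
        rw [he]
        rfl
      simp only [Set.mem_preimage, hex, hE2, Set.mem_setOf_eq, key x]
      constructor
      · rintro ⟨h1, h2⟩
        exact ⟨h1, h2 0, fun i => h2 _⟩
      · rintro ⟨h1, h2, h3⟩
        refine ⟨h1, fun i => ?_⟩
        induction i using Fin.cases with
        | zero => exact h2
        | succ i => exact h3 i
    rw [hEeq, mp.measure_preimage hE2m.nullMeasurableSet]
    set A : Set (ℝ × (Fin n → ℝ)) :=
      {p | H p.2 ≠ 0 ∧ G p.2 + p.1 * H p.2 = 0 ∧ p.1 ≠ 0} with hA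
    set B' : Set (Fin n → ℝ) := {y | H y = 0 ∧ ∀ i, y i ≠ 0} with hB'
    have hsub : E2 ⊆ A ∪ Set.univ ×ˢ B' := by
      rintro ⟨t, y⟩ ⟨h1, h2, h3⟩
      by_cases hHy : H y = 0
      · exact Or.inr ⟨trivial, hHy, h3⟩
      · exact Or.inl ⟨hHy, h1, h2⟩
    have hAnull : ((μ 0).prod ν) A = 0 := by
      set A' : Set ((Fin n → ℝ) × ℝ) :=
        {q | H q.1 ≠ 0 ∧ G q.1 + q.2 * H q.1 = 0 ∧ q.2 ≠ 0} with hA'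
      have hA'm : MeasurableSet A' := by
        refine MeasurableSet.inter ?_ (MeasurableSet.inter ?_ ?_)
        · exact msetNe (hHm.comp measurable_fst)
        · exact msetEq ((hGm.comp measurable_fst).add (measurable_snd.mul (hHm.comp measurable_fst)))
        · exact msetNe measurable_snd
      have hswap : A = Prod.swap ⁻¹' A' := by
        ext ⟨t, y⟩
        simp [hA, hA', Prod.swap]
      rw [hswap, (Measure.measurePreserving_swap (μ := μ 0) (ν := ν)).measure_preimage hA'm.nullMeasurableSet,
        Measure.measure_prod_null hA'm]
      refine Filter.Eventually.of_forall fun y => ?_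
      by_cases hHy : H y = 0
      · have : Prod.mk y ⁻¹' A' = ∅ := by
          ext t
          simp [hA', hHy]
        simp [this]
      · have hsub2 : Prod.mk y ⁻¹' A' ⊆ {-(G y)/(H y)} \ {0} := by
          rintro t ⟨-, h1, h2⟩
          refine ⟨?_, h2⟩
          simp only [Set.mem_singleton_iff]
          field_simp
          linarith
        refine le_antisymm (le_trans (measure_mono hsub2) ?_) zero_le
        by_cases hz : -(G y)/(H y) = 0
        · rw [hz]
          simp
        · calc μ 0 ({-(G y)/(H y)} \ {0}) ≤ μ 0 {-(G y)/(H y)} :=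
                measure_mono Set.diff_subset
          _ = 0 := hat 0 _ hz
    have hBnull : ((μ 0).prod ν) (Set.univ ×ˢ B') = 0 := by
      rw [Measure.prod_prod, hIH]
      simp
    refine le_antisymm ?_ zero_le
    calc ((μ 0).prod ν) E2 ≤ ((μ 0).prod ν) (A ∪ Set.univ ×ˢ B') := measure_mono hsub
    _ ≤ ((μ 0).prod ν) A + ((μ 0).prod ν) (Set.univ ×ˢ B') := measure_union_le _ _
    _ = 0 := by rw [hAnull, hBnull, add_zero]

/-- For a random `n × n` real matrix with independent entries whose laws
are atomless off `0`, the event that `det A = 0` while some term of the permutation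
expansion of the determinant is nonzero has probability `0`. -/
theorem det_zero_with_nonzero_term_prob_zero
    (n : ℕ) (hn : 1 ≤ n)
    (μ : Fin n → Fin n → Measure ℝ)
    [∀ i j, IsProbabilityMeasure (μ i j)]
    (hatomless : ∀ i j, ∀ x : ℝ, x ≠ 0 → μ i j {x} = 0) :
    Measure.pi (fun i => Measure.pi (fun j => μ i j))
      {A : Fin n → Fin n → ℝ | (Matrix.of A).det = 0 ∧
        ∃ σ : Equiv.Perm (Fin n), (∏ i, A (σ i) i) ≠ 0} = 0 := by
  classical
  have hcover : {A : Fin n → Fin n → ℝ | (Matrix.of A).det = 0 ∧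
        ∃ σ : Equiv.Perm (Fin n), (∏ i, A (σ i) i) ≠ 0}
      = ⋃ σ : Equiv.Perm (Fin n),
          {A : Fin n → Fin n → ℝ | (Matrix.of A).det = 0 ∧ ∀ i, A (σ i) i ≠ 0} := by
    ext A
    simp only [Set.mem_setOf_eq, Set.mem_iUnion]
    constructor
    · rintro ⟨h1, σ, h2⟩
      exact ⟨σ, h1, fun i => Finset.prod_ne_zero_iff.1 h2 i (Finset.mem_univ i)⟩
    · rintro ⟨σ, h1, h2⟩
      exact ⟨h1, σ, Finset.prod_ne_zero_iff.2 fun i _ => h2 i⟩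
  rw [hcover]
  refine measure_iUnion_null fun σ => ?_
  set p : Fin n × Fin n → Prop := fun q => q.1 = σ q.2 with hp
  set K := {q : Fin n × Fin n // ¬ p q} with hK
  set cc : Equiv.Perm (Fin n) → (K → ℝ) → ℝ := fun τ z =>
    ((Equiv.Perm.sign τ : ℤ) : ℝ) *
      ∏ i ∈ (univ.filter fun i => ¬ τ i = σ i).attach,
        z ⟨(τ i.1, i.1), (Finset.mem_filter.1 i.2).2⟩ with hcc
  -- the equivalences
  let e1 : (Fin n → Fin n → ℝ) ≃ᵐ (Fin n × Fin n → ℝ) :=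
    { toEquiv :=
      { toFun := fun A q => A q.1 q.2
        invFun := fun f i j => f (i, j)
        left_inv := fun A => rfl
        right_inv := fun f => rfl }
      measurable_toFun := measurable_pi_lambda _ fun q =>
        (measurable_pi_apply q.2).comp (measurable_pi_apply q.1)
      measurable_invFun := measurable_pi_lambda _ fun i =>
        measurable_pi_lambda _ fun j => measurable_pi_apply (i, j) }
  have mp1 : MeasurePreserving e1 (Measure.pi (fun i => Measure.pi (fun j => μ i j)))
      (Measure.pi fun q : Fin n × Fin n => μ q.1 q.2) := by
    refine ⟨e1.measurable, ?_⟩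
    refine (Measure.pi_eq (μ := fun q : Fin n × Fin n => μ q.1 q.2) fun s hs => ?_).symm
    rw [Measure.map_apply e1.measurable (MeasurableSet.univ_pi hs)]
    have hpre : ⇑e1 ⁻¹' Set.pi Set.univ s
        = Set.pi Set.univ fun i => Set.pi Set.univ fun j => s (i, j) := by
      ext A
      simp only [Set.mem_preimage, Set.mem_univ_pi]
      exact ⟨fun h i j => h (i, j), fun h q => h q.1 q.2⟩
    rw [hpre, Measure.pi_pi]
    simp_rw [Measure.pi_pi]
    exact (Fintype.prod_prod_type fun q : Fin n × Fin n => (μ q.1 q.2) (s q)).symm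
  have mp2 := @measurePreserving_piEquivPiSubtypeProd (Fin n × Fin n)
    (fun _ => ℝ) _ _ (fun q : Fin n × Fin n => μ q.1 q.2) _ p _
  let e3 : Fin n ≃ Subtype p :=
    { toFun := fun i => ⟨(σ i, i), rfl⟩
      invFun := fun q => q.1.2
      left_inv := fun i => rfl
      right_inv := fun q => by
        rcases q with ⟨⟨a, b⟩, h⟩
        have h' : a = σ b := h
        subst h'
        rfl }
  have mp3 := (measurePreserving_piCongrLeft
      (fun q : Subtype p => μ q.1.1 q.1.2) e3).symm
      (MeasurableEquiv.piCongrLeft (fun _ : Subtype p => ℝ) e3)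
  set νz := Measure.pi fun q : K => μ q.1.1 q.1.2 with hνz
  set πx := Measure.pi fun i : Fin n => μ (σ i) i with hπx
  have mp4 := mp3.prod (MeasurePreserving.id νz)
  have Ψmp := mp4.comp (mp2.comp mp1)
  -- the target set
  set E2 : Set ((Fin n → ℝ) × (K → ℝ)) :=
    {q | (∑ τ : Equiv.Perm (Fin n), cc τ q.2
            * ∏ i ∈ univ.filter fun i => τ i = σ i, q.1 i) = 0
        ∧ ∀ i, q.1 i ≠ 0} with hE2
  have hccm : ∀ τ, Measurable fun z : K → ℝ => cc τ z := fun τ => by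
    rw [hcc]
    exact measurable_const.mul (Finset.measurable_prod _ fun i _ => measurable_pi_apply _)
  have hE2m : MeasurableSet E2 := by
    refine MeasurableSet.inter ?_ ?_
    · exact msetEq (Finset.measurable_sum _ fun τ _ =>
        ((hccm τ).comp measurable_snd).mul
          (Finset.measurable_prod _ fun i _ => (measurable_pi_apply i).comp measurable_fst))
    · have h1 : ∀ i : Fin n, MeasurableSet {q : (Fin n → ℝ) × (K → ℝ) | q.1 i ≠ 0} :=
        fun i => msetNe ((measurable_pi_apply i).comp measurable_fst)
      have h2 := MeasurableSet.iInter h1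
      have h3 : (⋂ i, {q : (Fin n → ℝ) × (K → ℝ) | q.1 i ≠ 0})
          = {q : (Fin n → ℝ) × (K → ℝ) | ∀ i, q.1 i ≠ 0} := by
        ext q; simp
      rwa [h3] at h2
  -- determinant expansion
  have hdet : ∀ A : Fin n → Fin n → ℝ,
      (Matrix.of A).det = ∑ τ : Equiv.Perm (Fin n),
        cc τ (fun q : K => A q.1.1 q.1.2)
          * ∏ i ∈ univ.filter fun i => τ i = σ i, A (σ i) i := by
    intro A
    rw [Matrix.det_apply]
    refine Finset.sum_congr rfl fun τ _ => ?_
    have hsplit : (∏ i, A (τ i) i)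
        = (∏ i ∈ univ.filter fun i => τ i = σ i, A (τ i) i)
          * ∏ i ∈ univ.filter fun i => ¬ τ i = σ i, A (τ i) i :=
      (Finset.prod_filter_mul_prod_filter_not univ _ _).symm
    have h2 : (∏ i ∈ univ.filter fun i => τ i = σ i, A (τ i) i)
        = ∏ i ∈ univ.filter fun i => τ i = σ i, A (σ i) i :=
      Finset.prod_congr rfl fun i hi => by rw [(Finset.mem_filter.1 hi).2]
    have h3 : (∏ i ∈ (univ.filter fun i => ¬ τ i = σ i).attach,
          (fun q : K => A q.1.1 q.1.2) ⟨(τ i.1, i.1), (Finset.mem_filter.1 i.2).2⟩)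
        = ∏ i ∈ univ.filter fun i => ¬ τ i = σ i, A (τ i) i := by
      rw [← Finset.prod_attach (univ.filter fun i => ¬ τ i = σ i) (fun i => A (τ i) i)]
    have hof : (∏ i, (Matrix.of A) (τ i) i) = ∏ i, A (τ i) i := rfl
    rw [Units.smul_def, zsmul_eq_mul, hof, hcc]
    push_cast
    rw [h3, hsplit, ← h2]
    ring
  -- the preimage identity
  have hpre : {A : Fin n → Fin n → ℝ | (Matrix.of A).det = 0 ∧ ∀ i, A (σ i) i ≠ 0}
      = ((Prod.map (⇑(MeasurableEquiv.piCongrLeft (fun _ : Subtype p => ℝ) e3).symm) id)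
          ∘ (⇑(MeasurableEquiv.piEquivPiSubtypeProd (fun _ : Fin n × Fin n => ℝ) p)
          ∘ ⇑e1)) ⁻¹' E2 := by
    ext A
    have hΨ : ((Prod.map (⇑(MeasurableEquiv.piCongrLeft (fun _ : Subtype p => ℝ) e3).symm) id)
          ∘ (⇑(MeasurableEquiv.piEquivPiSubtypeProd (fun _ : Fin n × Fin n => ℝ) p)
          ∘ ⇑e1)) A
        = (fun i => A (σ i) i, fun q : K => A q.1.1 q.1.2) := rfl
    simp only [Set.mem_preimage, hΨ, hE2, Set.mem_setOf_eq, hdet A]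
    exact Iff.rfl
  rw [hpre, Ψmp.measure_preimage hE2m.nullMeasurableSet]
  show (πx.prod νz) E2 = 0
  -- swap and slice
  set E2' : Set ((K → ℝ) × (Fin n → ℝ)) :=
    {q | (∑ τ : Equiv.Perm (Fin n), cc τ q.1
            * ∏ i ∈ univ.filter fun i => τ i = σ i, q.2 i) = 0
        ∧ ∀ i, q.2 i ≠ 0} with hE2'
  have hE2'm : MeasurableSet E2' := by
    refine MeasurableSet.inter ?_ ?_
    · exact msetEq (Finset.measurable_sum _ fun τ _ =>
        ((hccm τ).comp measurable_fst).mul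
          (Finset.measurable_prod _ fun i _ => (measurable_pi_apply i).comp measurable_snd))
    · have h1 : ∀ i : Fin n, MeasurableSet {q : (K → ℝ) × (Fin n → ℝ) | q.2 i ≠ 0} :=
        fun i => msetNe ((measurable_pi_apply i).comp measurable_snd)
      have h2 := MeasurableSet.iInter h1
      have h3 : (⋂ i, {q : (K → ℝ) × (Fin n → ℝ) | q.2 i ≠ 0})
          = {q : (K → ℝ) × (Fin n → ℝ) | ∀ i, q.2 i ≠ 0} := by
        ext q; simp
      rwa [h3] at h2
  have hswapset : E2 = Prod.swap ⁻¹' E2' := by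
    ext q
    rfl
  rw [hswapset,
    (Measure.measurePreserving_swap (μ := πx) (ν := νz)).measure_preimage
      hE2'm.nullMeasurableSet,
    Measure.measure_prod_null hE2'm]
  refine Filter.Eventually.of_forall fun z => ?_
  -- top-coefficient condition
  have hfilt : (univ.filter fun τ : Equiv.Perm (Fin n) =>
      (univ.filter fun i => τ i = σ i) = univ) = {σ} := by
    ext τ
    simp only [Finset.mem_filter, Finset.mem_univ, true_and, Finset.mem_singleton,
      Finset.filter_eq_self]
    constructor
    · intro h
      exact Equiv.ext fun i => by simpa using h i
    · rintro rfl
      simp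
  have htopval : (∑ τ ∈ univ.filter (fun τ : Equiv.Perm (Fin n) =>
      (univ.filter fun i => τ i = σ i) = univ), cc τ z) ≠ 0 := by
    rw [hfilt, Finset.sum_singleton]
    simp only [hcc]
    haveI : IsEmpty {x : Fin n // x ∈ univ.filter fun i => ¬ σ i = σ i} :=
      ⟨fun i => (Finset.mem_filter.1 i.2).2 rfl⟩
    rw [Finset.prod_of_isEmpty, mul_one]
    rcases Int.units_eq_one_or (Equiv.Perm.sign σ) with h | h <;> simp [h]
  exact main_lemma n (fun i => μ (σ i) i) (fun i => inferInstance)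
    (fun i x hx => hatomless _ _ x hx) (Equiv.Perm (Fin n)) inferInstance
    (fun τ => cc τ z) (fun τ => univ.filter fun i => τ i = σ i) htopval
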